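/- Let G = (V_1 ∪ … ∪ V_k, E) be a k-partite k-uniform hypergraph. If G is representable as an axis-parallel point line cover instance in ℝ^k (edges mapped injectively to points, each vertex in V_i mapped injectively to a distinct axis-parallel line in direction i, with v ∈ e iff the line of v contains the point of e), then G is vertex-separable. -/

import Mathlib

/-- A `k`-partite `k`-uniform hypergraph: vertices `V` with parts indexed by `Fin k`,
hyperedges indexed by `E`, each hyperedge selecting exactly one vertex per part. -/
structure KHypergraph (k : ℕ) (V E : Type) where
  part : V → Fin k
  vert : E → Fin k → V
  hpart : ∀ e i, part (vert e i) = i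

namespace KHypergraph

variable {k : ℕ} {V E : Type}

/-- Vertex `v` belongs to hyperedge `e`. -/
def Mem (G : KHypergraph k V E) (v : V) (e : E) : Prop :=
  G.vert e (G.part v) = v

/-- Two vertices are adjacent if they are both contained in a common hyperedge. -/
def Adj (G : KHypergraph k V E) (u v : V) : Prop :=
  ∃ e : E, G.Mem u e ∧ G.Mem v e

/-- `l` is an `s`–`t` path: a nonempty sequence of vertices starting at `s`, ending at `t`,
with consecutive vertices contained in a common hyperedge. -/
def IsPath (G : KHypergraph k V E) (s t : V) (l : List V) : Prop :=
  l.Chain' G.Adj ∧ l.head? = some s ∧ l.getLast? = some t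

/-- Vertex separability: every two distinct vertices of the same part `V_i` can be
separated by removing some part `V_j`, `j ≠ i`. -/
def VertexSeparable (G : KHypergraph k V E) : Prop :=
  ∀ v v' : V, v ≠ v' → G.part v = G.part v' →
    ∃ j : Fin k, j ≠ G.part v ∧
      ∀ l : List V, G.IsPath v v' l → ∃ w ∈ l, G.part w = j

/-- Edge separability: every two distinct hyperedges can be separated by removing
some part `V_j`. -/
def EdgeSeparable (G : KHypergraph k V E) : Prop :=
  ∀ e e' : E, G.vert e ≠ G.vert e' →
    ∃ j : Fin k, ∀ (v v' : V) (l : List V), G.Mem v e → G.Mem v' e' →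
      G.IsPath v v' l → ∃ w ∈ l, G.part w = j

/-- The axis-parallel line in `ℝ^k` representing a vertex `v` of part `i = G.part v`:
all coordinates `j ≠ i` are fixed to `L v j`, coordinate `i` is free. -/
def lineOf (G : KHypergraph k V E) (L : V → Fin k → ℝ) (v : V) : Set (Fin k → ℝ) :=
  {x | ∀ j : Fin k, j ≠ G.part v → x j = L v j}

/-- `(p, L)` is an axis-parallel point line cover representation of `G` in `ℝ^k`:
hyperedges map to pairwise distinct points, vertices map to pairwise distinct
axis-parallel lines (part `V_i` to direction `i`), and hypergraph incidence coincides
with geometric incidence. -/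
def Represents (G : KHypergraph k V E) (p : E → Fin k → ℝ) (L : V → Fin k → ℝ) : Prop :=
  Function.Injective p ∧
  (∀ v v' : V, v ≠ v' → G.lineOf L v ≠ G.lineOf L v') ∧
  (∀ (v : V) (e : E), G.Mem v e ↔ p e ∈ G.lineOf L v)

/-- The auxiliary graph `G_i` on the hyperedges: `e` and `e'` are adjacent iff they
share a vertex in a part `V_j` with `j ≠ i`. -/
def GiAdj (G : KHypergraph k V E) (i : Fin k) (e e' : E) : Prop :=
  ∃ v : V, G.Mem v e ∧ G.Mem v e' ∧ G.part v ≠ i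

end KHypergraph

/-- If a `k`-partite `k`-uniform hypergraph is representable as an axis-parallel point
line cover instance in `ℝ^k`, then it is vertex-separable. -/
theorem stmt6 {k : ℕ} {V E : Type} (G : KHypergraph k V E)
    (p : E → Fin k → ℝ) (L : V → Fin k → ℝ) (hrep : G.Represents p L) :
    G.VertexSeparable := by
  obtain ⟨hp, hlines, hinc⟩ := hrep
  intro v v' hne hpart
  have hj : ∃ j : Fin k, j ≠ G.part v ∧ L v j ≠ L v' j := by
    by_contra h
    push_neg at h
    apply hlines v v' hne
    ext x
    simp only [KHypergraph.lineOf, Set.mem_setOf_eq, ← hpart]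
    constructor
    · intro hx j hjne; rw [← h j hjne]; exact hx j hjne
    · intro hx j hjne; rw [h j hjne]; exact hx j hjne
  obtain ⟨j, hji, hLj⟩ := hj
  refine ⟨j, hji, ?_⟩
  intro l hl
  by_contra hcon
  push_neg at hcon
  obtain ⟨hchain, hhead, hlast⟩ := hl
  have key : ∀ (l : List V), l.Chain' G.Adj → (∀ w ∈ l, G.part w ≠ j) →
      ∀ a b, l.head? = some a → l.getLast? = some b → L a j = L b j := by
    intro l
    induction l with
    | nil => intro _ _ a b h; simp at h
    | cons x xs ih =>
      intro hch hmem a b ha hb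
      simp only [List.head?_cons, Option.some.injEq] at ha
      subst ha
      cases xs with
      | nil =>
        simp only [List.getLast?_singleton, Option.some.injEq] at hb
        subst hb; rfl
      | cons y ys =>
        simp only [List.Chain', List.isChain_cons_cons] at hch
        obtain ⟨e, hxe, hye⟩ := hch.1
        have hxj : p e j = L x j :=
          (hinc x e).mp hxe j (fun h => hmem x (by simp) (h ▸ rfl))
        have hyj : p e j = L y j :=
          (hinc y e).mp hye j (fun h => hmem y (by simp) (h ▸ rfl))
        have htail : L y j = L b j := by
          apply ih hch.2 (fun w hw => hmem w (List.mem_cons_of_mem _ hw)) y b rfl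
          rw [← hb, List.getLast?_cons_cons]
        rw [← htail, ← hxj, hyj]
  exact hLj (key l hchain hcon v v' hhead hlast)
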